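/- Let d be a nonnegative travel-time function on N = {0} ∪ C with d(i,i) = 0 that satisfies the triangle inequality d(i,j) ≤ d(i,l) + d(l,j) for all i, l, j ∈ N, and let all processing times be zero (p_c = 0 for every customer c). Then for every feasible VRP-RPD schedule with makespan T there exists a partition of the n customers into at most m ordered sequences (each customer assigned to the vehicle performing its dropoff, ordered by dropoff time) whose maximum tour length is at most T. Consequently, the min-max VRP value is at most the optimal VRP-RPD makespan. -/

import Mathlib

namespace VRPRPD

/-- The kind of an operation at a customer: a dropoff or a pickup. -/
inductive OpKind : Type
  | drop
  | pick
deriving DecidableEq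

/-- One scheduled operation of a vehicle: the customer served, the kind of
operation, and the arrival and departure times of the vehicle at the customer. -/
structure Entry (n : ℕ) : Type where
  cust : Fin n
  kind : OpKind
  arr : ℝ
  dep : ℝ

/-- A schedule assigns to each of the `m` vehicles a finite sequence of
timed operations. -/
abbrev Schedule (n m : ℕ) : Type := Fin m → List (Entry n)

/-- The location of customer `c` in `N = {0} ∪ C`, where the depot is `0` and
customer `c` is coded as location `c + 1` in `Fin (n+1)`. -/
def loc {n : ℕ} (c : Fin n) : Fin (n + 1) := c.succ

/-- Total number of operations of kind `k` performed at customer `c` over all vehicles. -/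
def countOp {n m : ℕ} (S : Schedule n m) (c : Fin n) (k : OpKind) : ℕ :=
  ∑ v : Fin m, (S v).countP (fun e => decide (e.cust = c ∧ e.kind = k))

/-- The load (number of resources carried) of a vehicle after performing the
operations in the list `l`, having started at the depot with `kcap` resources:
a dropoff decreases the load by one, a pickup increases it by one. -/
def loadAfter {n : ℕ} (kcap : ℕ) (l : List (Entry n)) : ℤ :=
  (kcap : ℤ) - (l.countP (fun e => decide (e.kind = OpKind.drop)) : ℤ)
    + (l.countP (fun e => decide (e.kind = OpKind.pick)) : ℤ)

/-- Feasibility of a VRP-RPD schedule for travel times `d`, processing times `p`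
and vehicle capacity `kcap`: each customer gets exactly one dropoff and one pickup
(possibly by different vehicles); each vehicle starts at the depot at time `0`
carrying `kcap` resources and travels between consecutive operation locations
taking at least the corresponding travel time (waiting allowed); the load stays
between `0` and `kcap` along each route (so a dropoff requires load at least one
and a pickup load at most `kcap - 1`); and the pickup of customer `c` (which
occurs at the departure of the pickup vehicle) happens no earlier than `p c` time
units after its dropoff (which occurs at the arrival of the dropoff vehicle). -/
structure Feasible {n m : ℕ} (d : Fin (n + 1) → Fin (n + 1) → ℝ) (p : Fin n → ℝ)
    (kcap : ℕ) (S : Schedule n m) : Prop where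
  drop_once : ∀ c : Fin n, countOp S c OpKind.drop = 1
  pick_once : ∀ c : Fin n, countOp S c OpKind.pick = 1
  arr_le_dep : ∀ v : Fin m, ∀ e ∈ S v, e.arr ≤ e.dep
  first_arr : ∀ v : Fin m, ∀ e ∈ (S v).head?, d 0 (loc e.cust) ≤ e.arr
  travel : ∀ v : Fin m, ∀ r : ℕ, (h : r + 1 < (S v).length) →
    ((S v).get ⟨r, Nat.lt_of_succ_lt h⟩).dep
      + d (loc ((S v).get ⟨r, Nat.lt_of_succ_lt h⟩).cust)
          (loc ((S v).get ⟨r + 1, h⟩).cust)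
      ≤ ((S v).get ⟨r + 1, h⟩).arr
  load_nonneg : ∀ v : Fin m, ∀ r : ℕ, 0 ≤ loadAfter kcap ((S v).take r)
  load_le_cap : ∀ v : Fin m, ∀ r : ℕ, loadAfter kcap ((S v).take r) ≤ (kcap : ℤ)
  precedence : ∀ (c : Fin n) (v w : Fin m) (eD eP : Entry n),
    eD ∈ S v → eP ∈ S w → eD.cust = c → eD.kind = OpKind.drop →
    eP.cust = c → eP.kind = OpKind.pick → eD.arr + p c ≤ eP.dep

/-- The time at which vehicle `v` returns to the depot: the departure time from
its last operation plus the travel time back to the depot (`0` if the vehicle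
performs no operation and stays at the depot). -/
def returnTime {n m : ℕ} (d : Fin (n + 1) → Fin (n + 1) → ℝ) (S : Schedule n m)
    (v : Fin m) : ℝ :=
  match (S v).getLast? with
  | none => 0
  | some e => e.dep + d (loc e.cust) 0

/-- The makespan of a schedule: the maximum over vehicles of the depot return time. -/
def makespan {n m : ℕ} (d : Fin (n + 1) → Fin (n + 1) → ℝ) (S : Schedule n m) : ℝ :=
  ((List.finRange m).map (returnTime d S)).foldr max 0

/-- Length of a path through a list of locations: the sum of the travel times of
consecutive pairs. -/
def pathLen {n : ℕ} (d : Fin (n + 1) → Fin (n + 1) → ℝ) : List (Fin (n + 1)) → ℝ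
  | [] => 0
  | [_] => 0
  | a :: b :: rest => d a b + pathLen d (b :: rest)

/-- Tour length of an ordered sequence `c₁, …, c_L` of customers:
`d(0,c₁) + Σ d(cᵢ,cᵢ₊₁) + d(c_L,0)`, and `0` for the empty sequence. -/
def tourLen {n : ℕ} (d : Fin (n + 1) → Fin (n + 1) → ℝ) (l : List (Fin n)) : ℝ :=
  match l with
  | [] => 0
  | _ => pathLen d ((0 : Fin (n + 1)) :: l.map loc ++ [(0 : Fin (n + 1))])

/-- `routes` is a partition of the `n` customers into at most `m` ordered
sequences: every customer occurs exactly once among all the sequences. -/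
def IsPartition {n m : ℕ} (routes : Fin m → List (Fin n)) : Prop :=
  ∀ c : Fin n, (∑ v : Fin m, (routes v).count c) = 1

/-- The maximum tour length over the sequences of a partition. -/
def maxTour {n m : ℕ} (d : Fin (n + 1) → Fin (n + 1) → ℝ)
    (routes : Fin m → List (Fin n)) : ℝ :=
  ((List.finRange m).map (fun v => tourLen d (routes v))).foldr max 0

/-- The min-max VRP value: the minimum, over partitions of the customers into at
most `m` ordered sequences, of the maximum tour length of a sequence. -/
noncomputable def minmaxVRP (n m : ℕ) (d : Fin (n + 1) → Fin (n + 1) → ℝ) : ℝ :=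
  sInf {T : ℝ | ∃ routes : Fin m → List (Fin n), IsPartition routes ∧ maxTour d routes = T}

/-- The optimal VRP-RPD makespan: the minimum makespan over feasible schedules. -/
noncomputable def optMakespan (n m : ℕ) (d : Fin (n + 1) → Fin (n + 1) → ℝ)
    (p : Fin n → ℝ) (kcap : ℕ) : ℝ :=
  sInf {T : ℝ | ∃ S : Schedule n m, Feasible d p kcap S ∧ makespan d S = T}

end VRPRPD

namespace VRPRPD

/-- The partition of the customers induced by a schedule: each customer is
assigned to the vehicle performing its dropoff, ordered by dropoff time
(dropoffs appear along a vehicle's route in nondecreasing time order). -/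
def dropRoutes {n m : ℕ} (S : Schedule n m) : Fin m → List (Fin n) :=
  fun v => ((S v).filter (fun e => decide (e.kind = OpKind.drop))).map Entry.cust

section Aux

variable {n m : ℕ}

lemma foldr_max_nonneg (L : List ℝ) : 0 ≤ L.foldr max 0 := by
  induction L with
  | nil => simp
  | cons a t ih => exact le_max_of_le_right ih

lemma le_foldr_max {L : List ℝ} {x : ℝ} (hx : x ∈ L) : x ≤ L.foldr max 0 := by
  induction L with
  | nil => simp at hx
  | cons a t ih =>
    rcases List.mem_cons.mp hx with h | h
    · subst h; exact le_max_left _ _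
    · exact le_max_of_le_right (ih h)

lemma foldr_max_le {L : List ℝ} {B : ℝ} (h0 : 0 ≤ B) (h : ∀ x ∈ L, x ≤ B) :
    L.foldr max 0 ≤ B := by
  induction L with
  | nil => simpa
  | cons a t ih =>
    exact max_le (h a (by simp)) (ih fun x hx => h x (List.mem_cons_of_mem _ hx))

variable {d : Fin (n + 1) → Fin (n + 1) → ℝ}

lemma pathLen_cons_le (hd_tri : ∀ i l j, d i j ≤ d i l + d l j)
    (a x : Fin (n + 1)) {r : List (Fin (n + 1))} (hr : r ≠ []) :
    pathLen d (a :: r) ≤ d a x + pathLen d (x :: r) := by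
  cases r with
  | nil => exact absurd rfl hr
  | cons y r' =>
    show d a y + pathLen d (y :: r') ≤ d a x + (d x y + pathLen d (y :: r'))
    have := hd_tri a x y
    linarith

lemma pathLen_sublist (hd_tri : ∀ i l j, d i j ≤ d i l + d l j)
    {L1 L2 : List (Fin (n + 1))} (h : List.Sublist L1 L2) (b : Fin (n + 1)) :
    ∀ a, pathLen d (a :: (L1 ++ [b])) ≤ pathLen d (a :: (L2 ++ [b])) := by
  induction h with
  | slnil => intro a; exact le_refl _
  | @cons L1 L2 x h ih =>
    intro a
    calc pathLen d (a :: (L1 ++ [b])) ≤ pathLen d (a :: (L2 ++ [b])) := ih a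
      _ ≤ d a x + pathLen d (x :: (L2 ++ [b])) :=
        pathLen_cons_le hd_tri a x (by simp)
      _ = pathLen d (a :: ((x :: L2) ++ [b])) := rfl
  | @cons_cons L1 L2 x h ih =>
    intro a
    show d a x + pathLen d (x :: (L1 ++ [b])) ≤ d a x + pathLen d (x :: (L2 ++ [b]))
    exact add_le_add_right (ih x) _

lemma route_time :
    ∀ (l : List (Entry n)) (e : Entry n),
      List.Chain' (fun e1 e2 => e1.dep + d (loc e1.cust) (loc e2.cust) ≤ e2.arr) (e :: l) →
      (∀ x ∈ e :: l, x.arr ≤ x.dep) →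
      e.arr + pathLen d (((e :: l).map (fun x => loc x.cust)) ++ [0]) ≤
        ((e :: l).getLast (by simp)).dep + d (loc ((e :: l).getLast (by simp)).cust) 0 := by
  intro l
  induction l with
  | nil =>
    intro e _ ha
    have := ha e (by simp)
    simp only [List.map, List.getLast, List.cons_append, List.nil_append]
    show e.arr + (d (loc e.cust) 0 + pathLen d [0]) ≤ e.dep + d (loc e.cust) 0
    simp only [pathLen]
    linarith
  | cons f l' ih =>
    intro e hc ha
    rw [List.Chain', List.isChain_cons_cons] at hc
    obtain ⟨hef, hc'⟩ := hc
    have h1 : e.arr ≤ e.dep := ha e (by simp)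
    have h2 := ih f hc' (fun x hx => ha x (List.mem_cons_of_mem _ hx))
    have hlast : (e :: f :: l').getLast (by simp) = (f :: l').getLast (by simp) :=
      List.getLast_cons (by simp)
    rw [hlast]
    show e.arr + (d (loc e.cust) (loc f.cust) +
        pathLen d (((f :: l').map (fun x => loc x.cust)) ++ [0])) ≤ _
    linarith

end Aux

section Construction

variable {n : ℕ}

/-- A constant bounding all travel times. -/
noncomputable def Kc (d : Fin (n + 1) → Fin (n + 1) → ℝ) : ℝ := 1 + ∑ i, ∑ j, d i j

lemma Kc_nonneg {d : Fin (n + 1) → Fin (n + 1) → ℝ} (hd : ∀ i j, 0 ≤ d i j) :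
    (0 : ℝ) ≤ Kc d := by
  have : (0 : ℝ) ≤ ∑ i, ∑ j, d i j :=
    Finset.sum_nonneg fun i _ => Finset.sum_nonneg fun j _ => hd i j
  unfold Kc; linarith

lemma d_le_Kc {d : Fin (n + 1) → Fin (n + 1) → ℝ} (hd : ∀ i j, 0 ≤ d i j)
    (i j : Fin (n + 1)) : d i j ≤ Kc d := by
  have h1 : d i j ≤ ∑ j', d i j' :=
    Finset.single_le_sum (fun j' _ => hd i j') (Finset.mem_univ j)
  have h2 : ∑ j', d i j' ≤ ∑ i', ∑ j', d i' j' :=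
    Finset.single_le_sum (fun i' _ => Finset.sum_nonneg fun j' _ => hd i' j')
      (Finset.mem_univ i)
  unfold Kc; linarith

/-- The block of operations at customer `c` in the canonical schedule. -/
noncomputable def blkE (d : Fin (n + 1) → Fin (n + 1) → ℝ) (c : Fin n) : List (Entry n) :=
  [⟨c, OpKind.drop, ((c : ℕ) + 1) * Kc d, ((c : ℕ) + 1) * Kc d⟩,
   ⟨c, OpKind.pick, ((c : ℕ) + 1) * Kc d, ((c : ℕ) + 1) * Kc d⟩]

/-- The canonical single-vehicle route visiting all customers. -/
noncomputable def bigL (d : Fin (n + 1) → Fin (n + 1) → ℝ) : List (Entry n) :=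
  (List.finRange n).flatMap (blkE d)

lemma mem_bigL {d : Fin (n + 1) → Fin (n + 1) → ℝ} {e : Entry n} (he : e ∈ bigL d) :
    e.arr = ((e.cust : ℕ) + 1) * Kc d ∧ e.dep = ((e.cust : ℕ) + 1) * Kc d := by
  simp only [bigL, List.mem_flatMap, blkE, List.mem_cons, List.not_mem_nil, or_false] at he
  obtain ⟨c, _, h⟩ := he
  rcases h with h | h <;> subst h <;> simp

lemma countP_bigL (d : Fin (n + 1) → Fin (n + 1) → ℝ) (p : Entry n → Bool) :
    (bigL d).countP p = ∑ c : Fin n, (blkE d c).countP p := by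
  rw [bigL, List.flatMap, List.countP_flatten, List.map_map, Fin.sum_univ_def]
  rfl

lemma blk_prefix_counts (d : Fin (n + 1) → Fin (n + 1) → ℝ) :
    ∀ (cs : List (Fin n)) (r : ℕ),
      ((cs.flatMap (blkE d)).take r).countP (fun e => decide (e.kind = OpKind.pick)) ≤
        ((cs.flatMap (blkE d)).take r).countP (fun e => decide (e.kind = OpKind.drop)) ∧
      ((cs.flatMap (blkE d)).take r).countP (fun e => decide (e.kind = OpKind.drop)) ≤
        ((cs.flatMap (blkE d)).take r).countP (fun e => decide (e.kind = OpKind.pick)) + 1 := by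
  intro cs
  induction cs with
  | nil => intro r; simp
  | cons c cs' ih =>
    intro r
    match r with
    | 0 => simp
    | 1 =>
      simp [blkE, List.flatMap_cons, List.countP_cons]
    | (r' + 2) =>
      have : ((c :: cs').flatMap (blkE d)).take (r' + 2) =
          ⟨c, OpKind.drop, ((c : ℕ) + 1) * Kc d, ((c : ℕ) + 1) * Kc d⟩ ::
          ⟨c, OpKind.pick, ((c : ℕ) + 1) * Kc d, ((c : ℕ) + 1) * Kc d⟩ ::
          (cs'.flatMap (blkE d)).take r' := by
        simp [blkE, List.flatMap_cons]
      rw [this]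
      simp only [List.countP_cons]
      have := ih r'
      simp only [decide_eq_true_eq, reduceCtorEq, if_false, if_true, reduceIte]
      omega

lemma chain_bigL {d : Fin (n + 1) → Fin (n + 1) → ℝ}
    (hd_nonneg : ∀ i j, 0 ≤ d i j) (hd_refl : ∀ i, d i i = 0) :
    ∀ cs : List (Fin n), List.Chain' (· < ·) cs →
      List.Chain' (fun e1 e2 : Entry n =>
        e1.dep + d (loc e1.cust) (loc e2.cust) ≤ e2.arr) (cs.flatMap (blkE d)) := by
  intro cs
  induction cs with
  | nil => intro _; exact List.isChain_nil
  | cons c cs' ih =>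
    intro hcs
    rw [List.flatMap_cons]
    show List.Chain' _ (⟨c, OpKind.drop, _, _⟩ :: ⟨c, OpKind.pick, _, _⟩ :: cs'.flatMap (blkE d))
    rw [List.Chain', List.isChain_cons_cons]
    constructor
    · show ((c : ℕ) + 1) * Kc d + d (loc c) (loc c) ≤ ((c : ℕ) + 1) * Kc d
      rw [hd_refl]; linarith
    · cases cs' with
      | nil => simp
      | cons c' cs'' =>
        rw [List.Chain', List.isChain_cons_cons] at hcs
        obtain ⟨hcc', hcs'⟩ := hcs
        rw [List.flatMap_cons]
        show List.Chain' (α := Entry n) _ (⟨c, OpKind.pick, _, _⟩ :: ⟨c', OpKind.drop, _, _⟩ :: _)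
        rw [List.Chain', List.isChain_cons_cons]
        constructor
        · show ((c : ℕ) + 1) * Kc d + d (loc c) (loc c') ≤ ((c' : ℕ) + 1) * Kc d
          have hK := Kc_nonneg hd_nonneg
          have hdK := d_le_Kc hd_nonneg (loc c) (loc c')
          have hlt : ((c : ℕ) : ℝ) + 1 ≤ ((c' : ℕ) : ℝ) := by
            have : (c : ℕ) + 1 ≤ (c' : ℕ) := hcc'
            exact_mod_cast this
          nlinarith
        · have := ih hcs'
          rwa [List.flatMap_cons] at this

end Construction

/-- With nonnegative travel times vanishing on the diagonal and
satisfying the triangle inequality, and zero processing times, every feasible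
VRP-RPD schedule induces a partition of the customers into at most `m` ordered
sequences (each customer assigned to the vehicle performing its dropoff, ordered
by dropoff time) whose maximum tour length is at most the schedule's makespan.
Consequently, the min-max VRP value is at most the optimal VRP-RPD makespan. -/
theorem minmaxVRP_le_optMakespan (n m kcap : ℕ)
    (d : Fin (n + 1) → Fin (n + 1) → ℝ) (p : Fin n → ℝ)
    (hd_nonneg : ∀ i j, 0 ≤ d i j) (hd_refl : ∀ i, d i i = 0)
    (hd_tri : ∀ i l j, d i j ≤ d i l + d l j)
    (hp : ∀ c, p c = 0) (hk1 : 1 ≤ kcap) :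
    (∀ S : Schedule n m, Feasible d p kcap S →
        IsPartition (dropRoutes S) ∧ maxTour d (dropRoutes S) ≤ makespan d S) ∧
      minmaxVRP n m d ≤ optMakespan n m d p kcap := by
  have hcount : ∀ (S : Schedule n m) (v : Fin m) (c : Fin n),
      (dropRoutes S v).count c =
        (S v).countP (fun e => decide (e.cust = c ∧ e.kind = OpKind.drop)) := by
    intro S v c
    rw [dropRoutes, List.count_eq_countP, List.countP_map, List.countP_filter]
    apply List.countP_congr
    intro e _
    simp only [Function.comp, beq_iff_eq, Bool.and_eq_true, decide_eq_true_eq]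
  -- Part 1
  have part1 : ∀ S : Schedule n m, Feasible d p kcap S →
      IsPartition (dropRoutes S) ∧ maxTour d (dropRoutes S) ≤ makespan d S := by
    intro S hS
    constructor
    · intro c
      have h := hS.drop_once c
      rw [countOp] at h
      calc ∑ v, (dropRoutes S v).count c
          = ∑ v, (S v).countP (fun e => decide (e.cust = c ∧ e.kind = OpKind.drop)) :=
            Finset.sum_congr rfl (fun v _ => hcount S v c)
        _ = 1 := h
    · have hms : 0 ≤ makespan d S := foldr_max_nonneg _
      apply foldr_max_le hms
      intro x hx
      simp only [List.mem_map] at hx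
      obtain ⟨v, -, rfl⟩ := hx
      by_cases hnil : dropRoutes S v = []
      · rw [hnil]; exact hms
      · have hret : returnTime d S v ≤ makespan d S :=
          le_foldr_max (List.mem_map.mpr ⟨v, List.mem_finRange v, rfl⟩)
        have hSv : S v ≠ [] := by
          intro h; apply hnil; simp [dropRoutes, h]
        obtain ⟨e, l', hel⟩ := List.exists_cons_of_ne_nil hSv
        have hchain : List.Chain' (fun e1 e2 =>
            e1.dep + d (loc e1.cust) (loc e2.cust) ≤ e2.arr) (S v) := by
          rw [List.Chain', List.isChain_iff_getElem]
          intro i hi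
          exact hS.travel v i (by omega)
        have harr : ∀ x ∈ S v, x.arr ≤ x.dep := hS.arr_le_dep v
        rw [hel] at hchain harr
        have hfirst : d 0 (loc e.cust) ≤ e.arr := by
          apply hS.first_arr v
          rw [hel]; simp
        have hRT := route_time (d := d) l' e hchain harr
        have hret_eq : returnTime d S v =
            ((e :: l').getLast (by simp)).dep +
              d (loc (((e :: l').getLast (by simp))).cust) 0 := by
          rw [returnTime, hel, List.getLast?_eq_getLast]
        -- the full-route path length is bounded by the return time
        have hfull : pathLen d ((0 : Fin (n + 1)) ::
            (((e :: l').map (fun x => loc x.cust)) ++ [0])) ≤ returnTime d S v := by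
          have hstep : pathLen d ((0 : Fin (n + 1)) ::
              (((e :: l').map (fun x => loc x.cust)) ++ [0])) =
              d 0 (loc e.cust) +
                pathLen d (((e :: l').map (fun x => loc x.cust)) ++ [0]) := rfl
          rw [hstep, hret_eq]
          linarith
        -- sublist shortcutting
        have hsub : List.Sublist ((dropRoutes S v).map loc) ((S v).map (fun x => loc x.cust)) := by
          rw [dropRoutes, List.map_map]
          exact ((S v).filter_sublist).map (fun x => loc x.cust)
        rw [hel] at hsub
        obtain ⟨c0, cs, hdr⟩ := List.exists_cons_of_ne_nil hnil
        have htl : tourLen d (dropRoutes S v) =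
            pathLen d ((0 : Fin (n + 1)) :: ((dropRoutes S v).map loc ++ [0])) := by
          rw [hdr]; rfl
        calc tourLen d (dropRoutes S v)
            = pathLen d ((0 : Fin (n + 1)) :: ((dropRoutes S v).map loc ++ [0])) := htl
          _ ≤ pathLen d ((0 : Fin (n + 1)) ::
              (((e :: l').map (fun x => loc x.cust)) ++ [0])) :=
            pathLen_sublist hd_tri hsub 0 0
          _ ≤ returnTime d S v := hfull
          _ ≤ makespan d S := hret
  refine ⟨part1, ?_⟩
  -- Part 2
  have hA_bdd : BddBelow {T : ℝ | ∃ routes : Fin m → List (Fin n),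
      IsPartition routes ∧ maxTour d routes = T} := by
    refine ⟨0, ?_⟩
    rintro T ⟨r, -, rfl⟩
    exact foldr_max_nonneg _
  have key : ∀ (S : Schedule n m), Feasible d p kcap S →
      minmaxVRP n m d ≤ optMakespan n m d p kcap := by
    intro S0 hS0
    rw [minmaxVRP, optMakespan]
    refine le_csInf ⟨makespan d S0, S0, hS0, rfl⟩ ?_
    rintro T ⟨S, hS, rfl⟩
    obtain ⟨hpart, hle⟩ := part1 S hS
    exact le_trans (csInf_le hA_bdd ⟨dropRoutes S, hpart, rfl⟩) hle
  by_cases hm : m = 0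
  · by_cases hn : n = 0
    · subst hm; subst hn
      exact key (fun _ => []) ⟨fun c => c.elim0, fun c => c.elim0, fun v => v.elim0,
        fun v => v.elim0, fun v => v.elim0, fun v => v.elim0, fun v => v.elim0,
        fun c => c.elim0⟩
    · subst hm
      have c0 : Fin n := ⟨0, Nat.pos_of_ne_zero hn⟩
      have hA : {T : ℝ | ∃ routes : Fin 0 → List (Fin n),
          IsPartition routes ∧ maxTour d routes = T} = ∅ := by
        ext T
        simp only [Set.mem_setOf_eq, Set.mem_empty_iff_false, iff_false, not_exists]
        rintro routes ⟨hpart, -⟩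
        have := hpart c0
        simp at this
      have hB : {T : ℝ | ∃ S : Schedule n 0,
          Feasible d p kcap S ∧ makespan d S = T} = ∅ := by
        ext T
        simp only [Set.mem_setOf_eq, Set.mem_empty_iff_false, iff_false, not_exists]
        rintro S ⟨hS, -⟩
        have := hS.drop_once c0
        rw [countOp] at this
        simp at this
      rw [minmaxVRP, optMakespan, hA, hB, Real.sInf_empty]
  · -- m ≥ 1 : construct the canonical feasible schedule
    set v0 : Fin m := ⟨0, Nat.pos_of_ne_zero hm⟩ with hv0
    set S0 : Schedule n m := fun v => if v = v0 then bigL d else [] with hS0def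
    have hS0 : ∀ v, S0 v = if v = v0 then bigL d else [] := fun v => rfl
    have hS0v0 : S0 v0 = bigL d := by rw [hS0, if_pos rfl]
    have hmemL : ∀ {v : Fin m} {e : Entry n}, e ∈ S0 v → e ∈ bigL d := by
      intro v e he
      by_cases hv : v = v0
      · rwa [hS0, if_pos hv] at he
      · rw [hS0, if_neg hv] at he; simp at he
    have hKnn := Kc_nonneg (d := d) hd_nonneg
    have hcountS0 : ∀ pr : Entry n → Bool,
        (∑ v : Fin m, (S0 v).countP pr) = (bigL d).countP pr := by
      intro pr
      have h1 : ∀ v : Fin m, (S0 v).countP pr =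
          if v = v0 then (bigL d).countP pr else 0 := by
        intro v
        rw [hS0]
        split <;> simp
      rw [Finset.sum_congr rfl (fun v _ => h1 v), Finset.sum_ite_eq' Finset.univ v0]
      simp
    have hfeas : Feasible d p kcap S0 := by
      refine ⟨?_, ?_, ?_, ?_, ?_, ?_, ?_, ?_⟩
      · -- drop_once
        intro c
        rw [countOp, hcountS0, countP_bigL]
        have hblk : ∀ c' : Fin n, (blkE d c').countP
            (fun e => decide (e.cust = c ∧ e.kind = OpKind.drop)) =
            if c' = c then 1 else 0 := by
          intro c'
          simp [blkE, List.countP_cons]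
        rw [Finset.sum_congr rfl (fun c' _ => hblk c'), Finset.sum_ite_eq' Finset.univ c]
        simp
      · -- pick_once
        intro c
        rw [countOp, hcountS0, countP_bigL]
        have hblk : ∀ c' : Fin n, (blkE d c').countP
            (fun e => decide (e.cust = c ∧ e.kind = OpKind.pick)) =
            if c' = c then 1 else 0 := by
          intro c'
          simp [blkE, List.countP_cons]
        rw [Finset.sum_congr rfl (fun c' _ => hblk c'), Finset.sum_ite_eq' Finset.univ c]
        simp
      · -- arr_le_dep
        intro v e he
        obtain ⟨h1, h2⟩ := mem_bigL (hmemL he)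
        rw [h1, h2]
      · -- first_arr
        intro v e he
        have he' : e ∈ bigL d := hmemL (List.mem_of_mem_head? he)
        obtain ⟨h1, -⟩ := mem_bigL he'
        rw [h1]
        have h2 : d 0 (loc e.cust) ≤ Kc d := d_le_Kc hd_nonneg _ _
        have h3 : (0 : ℝ) ≤ ((e.cust : ℕ) : ℝ) := by positivity
        nlinarith
      · -- travel
        intro v r h
        by_cases hv : v = v0
        · subst hv
          have hchain : List.Chain' (fun e1 e2 : Entry n =>
              e1.dep + d (loc e1.cust) (loc e2.cust) ≤ e2.arr) (S0 v0) := by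
            rw [hS0v0]
            exact chain_bigL hd_nonneg hd_refl (List.finRange n)
              (List.pairwise_lt_finRange n).isChain
          exact (List.isChain_iff_getElem.mp hchain) r (by omega)
        · exact absurd h (by rw [hS0, if_neg hv]; simp)
      · -- load_nonneg
        intro v r
        by_cases hv : v = v0
        · subst hv
          rw [hS0v0, loadAfter]
          have := blk_prefix_counts d (List.finRange n) r
          rw [bigL]
          omega
        · rw [hS0, if_neg hv]
          simp [loadAfter]
      · -- load_le_cap
        intro v r
        by_cases hv : v = v0
        · subst hv
          rw [hS0v0, loadAfter]
          have := blk_prefix_counts d (List.finRange n) r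
          rw [bigL]
          omega
        · rw [hS0, if_neg hv]
          simp [loadAfter]
      · -- precedence
        intro c v w eD eP hD hP hDc hDk hPc hPk
        obtain ⟨hD1, -⟩ := mem_bigL (hmemL hD)
        obtain ⟨-, hP2⟩ := mem_bigL (hmemL hP)
        rw [hD1, hP2, hDc, hPc, hp c]
        simp
    exact key S0 hfeas

end VRPRPD
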